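/- Let R be a ℤ[q^{±1/2}]-algebra containing elements y₁, s, and a central element c with relations y₁ * s = q⁻¹ * s * y₁ and y₁ * c = q⁻² * c * y₁ (equivalently c = q·y₁·y₂ with y₂ s = q s y₂). Define S 0 = 1, S 1 = s, S (n+1) = S n * s - c * S (n-1). Then y₁ * S n = q⁻ⁿ * S n * y₁ for all n ≥ 0. -/
import Mathlib


/-- Lemma 3.1(1): y₁ q-commutes with every S n with exponent -n. -/
theorem y1_qcommutes_with_Sn
    (R : Type*) [Ring R] (q : Rˣ)
    (hq : ∀ r : R, (q : R) * r = r * (q : R))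
    (y₁ c s : R)
    (hc : ∀ r : R, c * r = r * c)
    (hy₁s : y₁ * s = (↑q⁻¹ : R) * s * y₁)
    (hy₁c : y₁ * c = (↑q⁻¹ : R) ^ 2 * c * y₁)
    (S : ℕ → R) (hS0 : S 0 = 1) (hS1 : S 1 = s)
    (hrec : ∀ n : ℕ, 1 ≤ n → S (n + 1) = S n * s - c * S (n - 1)) :
    ∀ n : ℕ, y₁ * S n = (↑q⁻¹ : R) ^ n * S n * y₁ := by
  have hq' : ∀ r : R, (↑q⁻¹ : R) * r = r * (↑q⁻¹ : R) := by
    intro r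
    have h := congrArg (fun x => (↑q⁻¹ : R) * x * (↑q⁻¹ : R)) (hq r)
    simpa [mul_assoc, Units.inv_mul_cancel_left, Units.mul_inv_cancel_right,
      Units.inv_mul, Units.mul_inv] using h.symm
  intro n
  induction n using Nat.strong_induction_on with
  | _ n ih =>
    match n with
    | 0 => simp [hS0]
    | 1 => simpa [hS1] using hy₁s
    | (m + 2) =>
      have h1 := ih (m + 1) (by omega)
      have h2 := ih m (by omega)
      rw [hrec (m + 1) (by omega)]
      simp only [Nat.add_sub_cancel]
      rw [mul_sub, mul_sub, sub_mul]
      congr 1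
      · calc y₁ * (S (m + 1) * s) = (y₁ * S (m + 1)) * s := by rw [mul_assoc]
          _ = (↑q⁻¹ : R) ^ (m + 1) * S (m + 1) * (y₁ * s) := by rw [h1]; ring_nf; rw [mul_assoc]
          _ = (↑q⁻¹ : R) ^ (m + 1) * S (m + 1) * ((↑q⁻¹ : R) * s * y₁) := by rw [hy₁s]
          _ = (↑q⁻¹ : R) ^ (m + 1) * (S (m + 1) * (↑q⁻¹ : R)) * (s * y₁) := by
                simp only [mul_assoc]
          _ = (↑q⁻¹ : R) ^ (m + 1) * ((↑q⁻¹ : R) * S (m + 1)) * (s * y₁) := by rw [hq']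
          _ = (↑q⁻¹ : R) ^ (m + 2) * (S (m + 1) * s) * y₁ := by
                simp only [pow_succ, mul_assoc]
      · calc y₁ * (c * S m) = (y₁ * c) * S m := by rw [mul_assoc]
          _ = (↑q⁻¹ : R) ^ 2 * c * (y₁ * S m) := by rw [hy₁c]; simp only [mul_assoc]
          _ = (↑q⁻¹ : R) ^ 2 * c * ((↑q⁻¹ : R) ^ m * S m * y₁) := by rw [h2]
          _ = (↑q⁻¹ : R) ^ 2 * ((↑q⁻¹ : R) ^ m * c) * (S m * y₁) := by
                simp only [mul_assoc]
                rw [← mul_assoc c, hc]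
                simp only [mul_assoc]
          _ = (↑q⁻¹ : R) ^ (m + 2) * (c * S m) * y₁ := by
                rw [show m + 2 = 2 + m from Nat.add_comm m 2, pow_add]
                simp only [mul_assoc]
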